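/- Strong Close Point Elimination: Let pq, pr, rx be three edges of a TSP instance and z ∈ V \ {p,q,r,x}. If l(xq) + l(rz) + l(zp) − m_{pr}(z) < l(pq) + l(rx), where m_{pr}(z) is the metric excess of z with respect to the edge pr, then the edges pq, pr, rx cannot all belong to the same optimum TSP tour. -/

import Mathlib

/-- A tour (Hamiltonian cycle), encoded as a cyclic permutation with no fixed points. -/
def IsTour {V : Type*} [Fintype V] (σ : Equiv.Perm V) : Prop :=
  σ.IsCycle ∧ ∀ v : V, σ v ≠ v

/-- The length of a tour. -/
noncomputable def tourLength {V : Type*} [Fintype V] (l : V → V → ℝ)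
    (σ : Equiv.Perm V) : ℝ :=
  ∑ v, l v (σ v)

/-- An optimum tour: a tour of minimum length. -/
def IsOptimumTour {V : Type*} [Fintype V] (l : V → V → ℝ) (σ : Equiv.Perm V) : Prop :=
  IsTour σ ∧ ∀ τ : Equiv.Perm V, IsTour τ → tourLength l σ ≤ tourLength l τ

/-- The edge `{a,b}` belongs to the tour `σ`. -/
def edgeIn {V : Type*} [Fintype V] (σ : Equiv.Perm V) (a b : V) : Prop :=
  σ a = b ∨ σ b = a

/-- The metric excess `m_{pr}(z)` of a vertex `z` with respect to the edge `pr`: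
the minimum, over pairs of distinct neighbours `a, b` of `z` avoiding `p` and `r`,
of the maximum of the four short-cut quantities. -/
noncomputable def metricExcess {V : Type*} (l : V → V → ℝ) (p r z : V) : ℝ :=
  sInf {M : ℝ | ∃ a b : V, a ≠ b ∧ a ≠ p ∧ a ≠ r ∧ b ≠ p ∧ b ≠ r ∧
    M = max (max (l a z + l z p - l a p) (l b z + l z p - l b p))
            (max (l a z + l z r - l a r) (l b z + l z r - l b r))}

section Aux

open Equiv Equiv.Perm

lemma perm_inv_apply_self' {α : Type*} (f : Equiv.Perm α) (x : α) : f⁻¹ (f x) = x :=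
  Equiv.symm_apply_apply f x

lemma perm_apply_inv_self' {α : Type*} (f : Equiv.Perm α) (x : α) : f (f⁻¹ x) = x :=
  Equiv.apply_symm_apply f x

/-- Inserting a fixed point `y` into a cycle `g` right after `w` yields a cycle. -/
lemma isCycle_insert' {α : Type*} [Finite α] [DecidableEq α] {g : Equiv.Perm α} {y w : α}
    (hg : g.IsCycle) (hy : g y = y) (hw : g w ≠ w) :
    (Equiv.swap y (g w) * g).IsCycle := by
  set h := Equiv.swap y (g w) * g with hh
  have hyw : y ≠ w := by rintro rfl; exact hw hy
  have hgwy : g w ≠ y := fun e => hyw (g.injective (hy.trans e.symm))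
  have hhw : h w = y := by simp [hh, Equiv.Perm.mul_apply]
  have hhy : h y = g w := by simp [hh, Equiv.Perm.mul_apply, hy]
  have hother : ∀ u, u ≠ w → u ≠ y → h u = g u := by
    intro u h1 h2
    have e1 : g u ≠ y := fun e => h2 (g.injective (e.trans hy.symm))
    have e2 : g u ≠ g w := fun e => h1 (g.injective e)
    simp [hh, Equiv.Perm.mul_apply, Equiv.swap_apply_of_ne_of_ne e1 e2]
  have hyfix : ∀ k : ℕ, (g ^ k) y = y := by
    intro k; induction k with
    | zero => rfl
    | succ n ih => rw [pow_succ, Equiv.Perm.mul_apply, hy]; exact ih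
  have hm : ∀ j : ℕ, 1 ≤ j → j < orderOf g → (g ^ j) w ≠ w := by
    intro j h1 h2 e
    have : g ^ j = 1 := (hg.pow_eq_one_iff' hw).mpr e
    have := Nat.le_of_dvd (by omega) (orderOf_dvd_of_pow_eq_one this)
    omega
  have claim : ∀ k : ℕ, 1 ≤ k → k < orderOf g → (h ^ (k + 1)) w = (g ^ k) w := by
    intro k
    induction k with
    | zero => omega
    | succ n ih =>
      intro _ hlt
      rcases Nat.eq_zero_or_pos n with rfl | hn
      · have : (h ^ 2) w = h (h w) := by
          rw [pow_succ', pow_one, Equiv.Perm.mul_apply]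
        rw [this, hhw, hhy, pow_one]
      · have hnm : n < orderOf g := by omega
        have h1 : (h ^ (n + 1 + 1)) w = h ((h ^ (n + 1)) w) := by
          rw [pow_succ', Equiv.Perm.mul_apply]
        rw [h1, ih hn hnm]
        have e1 : (g ^ n) w ≠ w := hm n hn hnm
        have e2 : (g ^ n) w ≠ y := fun e =>
          hyw ((g ^ n).injective (e.trans (hyfix n).symm)).symm
        rw [hother _ e1 e2, ← Equiv.Perm.mul_apply, ← pow_succ']
  refine ⟨w, by rw [hhw]; exact hyw, ?_⟩
  intro v hv
  rcases eq_or_ne v w with rfl | hvw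
  · exact Equiv.Perm.SameCycle.refl _ _
  rcases eq_or_ne v y with rfl | hvy
  · exact ⟨1, by simpa using hhw⟩
  have hgv : g v ≠ v := by
    intro e
    exact hv (by rw [hother v hvw hvy, e])
  obtain ⟨n, hn⟩ := hg.exists_pow_eq hw hgv
  have hn' : (g ^ (n % orderOf g)) w = v := by rw [pow_mod_orderOf]; exact hn
  set k := n % orderOf g with hk
  have hklt : k < orderOf g := Nat.mod_lt _ (orderOf_pos g)
  have hk1 : 1 ≤ k := by
    rcases Nat.eq_zero_or_pos k with e | h
    · exfalso; apply hvw; rw [← hn', e, pow_zero]; rfl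
    · exact h
  exact ⟨(k + 1 : ℕ), by rw [zpow_natCast, claim k hk1 hklt, hn']⟩

/-- The length of a tour is invariant under inversion (for symmetric `l`). -/
lemma tourLength_inv {V : Type*} [Fintype V] (l : V → V → ℝ) (hsymm : ∀ a b, l a b = l b a)
    (σ : Equiv.Perm V) : tourLength l σ⁻¹ = tourLength l σ := by
  unfold tourLength
  have := Equiv.sum_comp σ (fun v => l v (σ⁻¹ v))
  rw [← this]
  apply Finset.sum_congr rfl
  intro v _
  rw [perm_inv_apply_self', hsymm]

lemma isTour_inv {V : Type*} [Fintype V] {σ : Equiv.Perm V} (h : IsTour σ) : IsTour σ⁻¹ := by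
  refine ⟨h.1.inv, fun v e => h.2 v ?_⟩
  conv_lhs => rw [← e]
  rw [perm_apply_inv_self']

lemma tour_pow_ne {V : Type*} [Fintype V] {σ : Equiv.Perm V} (h : IsTour σ)
    (hcard : 5 ≤ Fintype.card V) {n : ℕ} (h1 : 1 ≤ n) (h2 : n < 5) (v : V) :
    (σ ^ n) v ≠ v := by
  classical
  intro e
  have hsupp : σ.support = Finset.univ :=
    Finset.eq_univ_iff_forall.mpr fun u => Equiv.Perm.mem_support.mpr (h.2 u)
  have horder : orderOf σ = Fintype.card V := by
    rw [h.1.orderOf, hsupp, Finset.card_univ]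
  have : σ ^ n = 1 := (h.1.pow_eq_one_iff' (h.2 v)).mpr e
  have := Nat.le_of_dvd (by omega) (orderOf_dvd_of_pow_eq_one this)
  omega

/-- The main 3-opt surgery: delete `pq`, `rx`, insert `qx`, and reinsert `p, r`
(in the order `s, t`) right after `w`. -/
lemma construct_tour {V : Type*} [Fintype V] [DecidableEq V] (l : V → V → ℝ)
    {σ : Equiv.Perm V} (hσ : IsTour σ) {p q r x w s t : V}
    (h1 : σ p = q) (h2 : σ r = p) (h3 : σ x = r)
    (hpq : p ≠ q) (hpr : p ≠ r) (hqr : q ≠ r) (hrx : r ≠ x) (hpx : p ≠ x) (hqx : q ≠ x)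
    (hst : (s = p ∧ t = r) ∨ (s = r ∧ t = p))
    (hwp : w ≠ p) (hwr : w ≠ r) (hwx : w ≠ x)
    (hσwp : σ w ≠ p) (hσwq : σ w ≠ q) (hσwr : σ w ≠ r) :
    ∃ τ : Equiv.Perm V, IsTour τ ∧
      tourLength l τ = tourLength l σ
        + ((l w s + l s t + l t (σ w) + l x q) - (l w (σ w) + l p q + l r p + l x r)) := by
  have hwσw : σ w ≠ w := hσ.2 w
  -- facts about s, t
  have hs : s = p ∨ s = r := by rcases hst with ⟨e, _⟩ | ⟨e, _⟩ <;> simp [e]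
  have ht : t = r ∨ t = p := by rcases hst with ⟨_, e⟩ | ⟨_, e⟩ <;> simp [e]
  have hstne : s ≠ t := by rcases hst with ⟨rfl, rfl⟩ | ⟨rfl, rfl⟩; exacts [hpr, hpr.symm]
  have hσws : σ w ≠ s := by rcases hs with rfl | rfl; exacts [hσwp, hσwr]
  have hσwt : σ w ≠ t := by rcases ht with rfl | rfl; exacts [hσwr, hσwp]
  have hqs : q ≠ s := by rcases hs with rfl | rfl; exacts [hpq.symm, hqr]
  have hqt : q ≠ t := by rcases ht with rfl | rfl; exacts [hqr, hpq.symm]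
  have hws : w ≠ s := by rcases hs with rfl | rfl; exacts [hwp, hwr]
  have hwt : w ≠ t := by rcases ht with rfl | rfl; exacts [hwr, hwp]
  have hxs : x ≠ s := by rcases hs with rfl | rfl; exacts [hpx.symm, hrx.symm]
  have hxt : x ≠ t := by rcases ht with rfl | rfl; exacts [hrx.symm, hpx.symm]
  have hcover : ∀ v, v ≠ s → v ≠ t → v ≠ p ∧ v ≠ r := by
    intro v a b; rcases hst with ⟨rfl, rfl⟩ | ⟨rfl, rfl⟩; exacts [⟨a, b⟩, ⟨b, a⟩]
  -- injectivity facts about σ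
  have hσvq : ∀ v, v ≠ p → σ v ≠ q := fun v hv e => hv (σ.injective (e.trans h1.symm))
  have hσvp : ∀ v, v ≠ r → σ v ≠ p := fun v hv e => hv (σ.injective (e.trans h2.symm))
  have hσvr : ∀ v, v ≠ x → σ v ≠ r := fun v hv e => hv (σ.injective (e.trans h3.symm))
  have hσqp : σ q ≠ p := hσvp q hqr
  have hσqr : σ q ≠ r := hσvr q hqx
  -- step 1: remove p
  have hσpp : σ p ≠ p := hσ.2 p
  have hσσp : σ (σ p) ≠ p := by rw [h1]; exact hσqp
  have hc1 : (Equiv.swap p q * σ).IsCycle := by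
    have := hσ.1.swap_mul hσpp hσσp
    rwa [h1] at this
  set ρ1 : Equiv.Perm V := Equiv.swap p q * σ with hρ1def
  have hρ1 : ∀ v, ρ1 v = Equiv.swap p q (σ v) := fun v => rfl
  -- step 2: remove r
  have hρ1r : ρ1 r = q := by rw [hρ1, h2, Equiv.swap_apply_left]
  have hρ1q : ρ1 q = σ q := by
    rw [hρ1, Equiv.swap_apply_of_ne_of_ne hσqp (fun e => hσ.2 q e)]
  have hc2 : (Equiv.swap r q * ρ1).IsCycle := by
    have := hc1.swap_mul (x := r) (by rw [hρ1r]; exact hqr)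
      (by rw [hρ1r, hρ1q]; exact hσqr)
    rwa [hρ1r] at this
  set ρ2 : Equiv.Perm V := Equiv.swap r q * ρ1 with hρ2def
  have hρ2 : ∀ v, ρ2 v = Equiv.swap r q (Equiv.swap p q (σ v)) := fun v => rfl
  have hρ2p : ρ2 p = p := by
    rw [hρ2, h1, Equiv.swap_apply_right,
      Equiv.swap_apply_of_ne_of_ne hpr hpq]
  have hρ2r : ρ2 r = r := by
    rw [hρ2, h2, Equiv.swap_apply_left, Equiv.swap_apply_right]
  have hρ2x : ρ2 x = q := by
    rw [hρ2, h3, Equiv.swap_apply_of_ne_of_ne hpr.symm hqr.symm, Equiv.swap_apply_left]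
  have hρ2v : ∀ v, v ≠ p → v ≠ r → v ≠ x → ρ2 v = σ v := by
    intro v hv1 hv2 hv3
    rw [hρ2, Equiv.swap_apply_of_ne_of_ne (hσvp v hv2) (hσvq v hv1),
      Equiv.swap_apply_of_ne_of_ne (hσvr v hv3) (hσvq v hv1)]
  have hρ2w : ρ2 w = σ w := hρ2v w hwp hwr hwx
  have hρ2s : ρ2 s = s := by rcases hs with rfl | rfl; exacts [hρ2p, hρ2r]
  have hρ2t : ρ2 t = t := by rcases ht with rfl | rfl; exacts [hρ2r, hρ2p]
  -- step 3: insert t after w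
  have hc3 : (Equiv.swap t (σ w) * ρ2).IsCycle := by
    have := isCycle_insert' hc2 hρ2t (w := w) (by rw [hρ2w]; exact hwσw)
    rwa [hρ2w] at this
  set ρ3 : Equiv.Perm V := Equiv.swap t (σ w) * ρ2 with hρ3def
  have hρ3 : ∀ v, ρ3 v = Equiv.swap t (σ w) (ρ2 v) := fun v => rfl
  have hρ3w : ρ3 w = t := by rw [hρ3, hρ2w, Equiv.swap_apply_right]
  have hρ3s : ρ3 s = s := by
    rw [hρ3, hρ2s, Equiv.swap_apply_of_ne_of_ne hstne hσws.symm]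
  -- step 4: insert s after w
  have hc4 : (Equiv.swap s t * ρ3).IsCycle := by
    have := isCycle_insert' hc3 hρ3s (w := w) (by rw [hρ3w]; exact hwt.symm)
    rwa [hρ3w] at this
  set τ : Equiv.Perm V := Equiv.swap s t * ρ3 with hτdef
  have hτ : ∀ v, τ v = Equiv.swap s t (ρ3 v) := fun v => rfl
  -- pointwise values of τ
  have hτw : τ w = s := by rw [hτ, hρ3w, Equiv.swap_apply_right]
  have hτs : τ s = t := by rw [hτ, hρ3s, Equiv.swap_apply_left]
  have hτt : τ t = σ w := by
    rw [hτ, hρ3, hρ2t, Equiv.swap_apply_left,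
      Equiv.swap_apply_of_ne_of_ne hσws hσwt]
  have hτx : τ x = q := by
    rw [hτ, hρ3, hρ2x, Equiv.swap_apply_of_ne_of_ne hqt hσwq.symm,
      Equiv.swap_apply_of_ne_of_ne hqs hqt]
  have hτv : ∀ v, v ≠ w → v ≠ s → v ≠ t → v ≠ x → τ v = σ v := by
    intro v hv1 hv2 hv3 hv4
    obtain ⟨hvp, hvr⟩ := hcover v hv2 hv3
    have e1 : σ v ≠ t := by
      rcases ht with rfl | rfl; exacts [hσvr v hv4, hσvp v hvr]
    have e2 : σ v ≠ s := by
      rcases hs with rfl | rfl; exacts [hσvp v hvr, hσvr v hv4]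
    have e3 : σ v ≠ σ w := fun e => hv1 (σ.injective e)
    rw [hτ, hρ3, hρ2v v hvp hvr hv4, Equiv.swap_apply_of_ne_of_ne e1 e3,
      Equiv.swap_apply_of_ne_of_ne e2 e1]
  -- τ is a tour
  have htour : IsTour τ := by
    refine ⟨hc4, fun v => ?_⟩
    rcases eq_or_ne v w with rfl | hv1
    · rw [hτw]; exact hws.symm
    rcases eq_or_ne v s with rfl | hv2
    · rw [hτs]; exact hstne.symm
    rcases eq_or_ne v t with rfl | hv3
    · rw [hτt]; exact hσwt
    rcases eq_or_ne v x with rfl | hv4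
    · rw [hτx]; exact hqx
    · rw [hτv v hv1 hv2 hv3 hv4]; exact hσ.2 v
  refine ⟨τ, htour, ?_⟩
  -- the length computation
  have hsum : l s (σ s) + l t (σ t) = l p q + l r p := by
    rcases hst with ⟨rfl, rfl⟩ | ⟨rfl, rfl⟩ <;> rw [h1, h2] <;> ring
  have hsplit : tourLength l τ - tourLength l σ = ∑ v, (l v (τ v) - l v (σ v)) := by
    unfold tourLength
    rw [Finset.sum_sub_distrib]
  have hF : ∑ v, (l v (τ v) - l v (σ v))
      = ∑ v ∈ ({w, s, t, x} : Finset V), (l v (τ v) - l v (σ v)) := by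
    refine (Finset.sum_subset (Finset.subset_univ _) ?_).symm
    intro v _ hv
    simp only [Finset.mem_insert, Finset.mem_singleton, not_or] at hv
    rw [hτv v hv.1 hv.2.1 hv.2.2.1 hv.2.2.2, sub_self]
  have hval : ∑ v ∈ ({w, s, t, x} : Finset V), (l v (τ v) - l v (σ v))
      = (l w s - l w (σ w)) + ((l s t - l s (σ s)) + ((l t (σ w) - l t (σ t))
        + (l x q - l x r))) := by
    rw [Finset.sum_insert (by simp [hws, hwt, hwx]),
      Finset.sum_insert (by simp [hstne, hxs.symm]),
      Finset.sum_insert (by simp [hxt.symm]), Finset.sum_singleton,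
      hτw, hτs, hτt, hτx, h3]
  rw [hF, hval] at hsplit
  linarith [hsum]

end Aux


section Main

open Equiv Equiv.Perm

lemma main_aux {V : Type*} [Fintype V] [DecidableEq V]
    (hcard : 5 ≤ Fintype.card V)
    (l : V → V → ℝ) (hsymm : ∀ a b, l a b = l b a)
    (p q r x z : V)
    (hpq : p ≠ q) (hpr : p ≠ r) (hqr : q ≠ r) (hrx : r ≠ x) (hpx : p ≠ x)
    (hzp : z ≠ p) (hzq : z ≠ q) (hzr : z ≠ r) (hzx : z ≠ x)
    (hineq : l x q + l r z + l z p - metricExcess l p r z < l p q + l r x)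
    (σ : Equiv.Perm V) (hopt : IsOptimumTour l σ)
    (h1 : σ p = q) (h2 : σ r = p) (h3 : σ x = r) : False := by
  obtain ⟨hσ, hmin⟩ := hopt
  have hqx : q ≠ x := by
    intro e
    have hsq : σ q = r := by rw [e, h3]
    exact tour_pow_ne hσ hcard (n := 3) (by norm_num) (by norm_num) p
      (by rw [pow_succ, Equiv.Perm.mul_apply, h1, pow_succ, Equiv.Perm.mul_apply, hsq,
        pow_one, h2])
  set a := σ⁻¹ z with ha
  have haz : σ a = z := perm_apply_inv_self' σ z
  set b := σ z with hb
  have hap : a ≠ p := fun e => hzq (by rw [← haz, e, h1])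
  have har : a ≠ r := fun e => hzp (by rw [← haz, e, h2])
  have hax : a ≠ x := fun e => hzr (by rw [← haz, e, h3])
  have hbp : b ≠ p := fun e => hzr (σ.injective (by rw [← hb, h2]; exact e.trans rfl))
  have hbr : b ≠ r := fun e => hzx (σ.injective (by rw [← hb, h3]; exact e.trans rfl))
  have hbq : b ≠ q := fun e => hzp (σ.injective (by rw [← hb, h1]; exact e.trans rfl))
  have hab : a ≠ b := by
    intro e
    exact tour_pow_ne hσ hcard (n := 2) (by norm_num) (by norm_num) z
      (by rw [pow_two, Equiv.Perm.mul_apply, ← hb, ← e, haz])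
  -- the metric excess is at most the max corresponding to the actual neighbours a, b of z
  have hsInf : metricExcess l p r z ≤
      max (max (l a z + l z p - l a p) (l b z + l z p - l b p))
          (max (l a z + l z r - l a r) (l b z + l z r - l b r)) := by
    apply csInf_le
    · apply Set.Finite.bddBelow
      apply Set.Finite.subset (Set.finite_range (fun ab : V × V =>
        max (max (l ab.1 z + l z p - l ab.1 p) (l ab.2 z + l z p - l ab.2 p))
            (max (l ab.1 z + l z r - l ab.1 r) (l ab.2 z + l z r - l ab.2 r))))
      rintro M ⟨a', b', _, _, _, _, _, rfl⟩
      exact ⟨(a', b'), rfl⟩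
    · exact ⟨a, b, hab, hap, har, hbp, hbr, rfl⟩
  -- hypotheses of the surgery lemma for w = a and for w = z
  have hσap : σ a ≠ p := by rw [haz]; exact hzp
  have hσaq : σ a ≠ q := by rw [haz]; exact hzq
  have hσar : σ a ≠ r := by rw [haz]; exact hzr
  have hσzp : σ z ≠ p := by rw [← hb]; exact hbp
  have hσzq : σ z ≠ q := by rw [← hb]; exact hbq
  have hσzr : σ z ≠ r := by rw [← hb]; exact hbr
  rcases max_choice (max (l a z + l z p - l a p) (l b z + l z p - l b p))
      (max (l a z + l z r - l a r) (l b z + l z r - l b r)) with hM | hM <;>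
    rw [hM] at hsInf
  · rcases max_choice (l a z + l z p - l a p) (l b z + l z p - l b p) with hM' | hM' <;>
      rw [hM'] at hsInf
    · -- case t_A : w = a, s = p, t = r
      obtain ⟨τ, htour, hlen⟩ := construct_tour l hσ h1 h2 h3 hpq hpr hqr hrx hpx hqx
        (Or.inl ⟨rfl, rfl⟩) hap har hax hσap hσaq hσar
      rw [haz] at hlen
      have hle := hmin τ htour
      rw [hlen] at hle
      linarith [hsymm p r, hsymm r x]
    · -- case t_D : w = z, s = r, t = p
      obtain ⟨τ, htour, hlen⟩ := construct_tour l hσ h1 h2 h3 hpq hpr hqr hrx hpx hqx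
        (Or.inr ⟨rfl, rfl⟩) hzp hzr hzx hσzp hσzq hσzr
      rw [← hb] at hlen
      have hle := hmin τ htour
      rw [hlen] at hle
      linarith [hsymm p b, hsymm z b, hsymm r x, hsymm z r, hsymm p r]
  · rcases max_choice (l a z + l z r - l a r) (l b z + l z r - l b r) with hM' | hM' <;>
      rw [hM'] at hsInf
    · -- case t_B : w = a, s = r, t = p
      obtain ⟨τ, htour, hlen⟩ := construct_tour l hσ h1 h2 h3 hpq hpr hqr hrx hpx hqx
        (Or.inr ⟨rfl, rfl⟩) hap har hax hσap hσaq hσar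
      rw [haz] at hlen
      have hle := hmin τ htour
      rw [hlen] at hle
      linarith [hsymm r z, hsymm p z, hsymm r x, hsymm p r]
    · -- case t_C : w = z, s = p, t = r
      obtain ⟨τ, htour, hlen⟩ := construct_tour l hσ h1 h2 h3 hpq hpr hqr hrx hpx hqx
        (Or.inl ⟨rfl, rfl⟩) hzp hzr hzx hσzp hσzq hσzr
      rw [← hb] at hlen
      have hle := hmin τ htour
      rw [hlen] at hle
      linarith [hsymm r b, hsymm z b, hsymm r z, hsymm r x, hsymm p r]

end Main

/-- **Strong Close Point Elimination Theorem**: the edges `pq`, `pr`, `rx` are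
`3`-incompatible. -/
theorem strong_close_point_elimination {V : Type*} [Fintype V]
    (hcard : 5 ≤ Fintype.card V)
    (l : V → V → ℝ) (hsymm : ∀ a b, l a b = l b a) (hnonneg : ∀ a b, 0 ≤ l a b)
    (p q r x z : V)
    (hpq : p ≠ q) (hpr : p ≠ r) (hqr : q ≠ r) (hrx : r ≠ x) (hpx : p ≠ x)
    (hzp : z ≠ p) (hzq : z ≠ q) (hzr : z ≠ r) (hzx : z ≠ x)
    (hineq : l x q + l r z + l z p - metricExcess l p r z < l p q + l r x) :
    ∀ σ : Equiv.Perm V, IsOptimumTour l σ →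
      ¬(edgeIn σ p q ∧ edgeIn σ p r ∧ edgeIn σ r x) := by
  classical
  intro σ hopt ⟨e1, e2, e3⟩
  rcases e1 with e1 | e1 <;> rcases e2 with e2 | e2
  · exact hqr (e1.symm.trans e2)
  · rcases e3 with e3 | e3
    · exact hpx (e2.symm.trans e3)
    · exact main_aux hcard l hsymm p q r x z hpq hpr hqr hrx hpx hzp hzq hzr hzx hineq
        σ hopt e1 e2 e3
  · rcases e3 with e3 | e3
    · -- σ q = p, σ p = r, σ r = x : apply to σ⁻¹
      have hopt' : IsOptimumTour l σ⁻¹ :=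
        ⟨isTour_inv hopt.1, fun τ ht => by
          rw [tourLength_inv l hsymm]; exact hopt.2 τ ht⟩
      refine main_aux hcard l hsymm p q r x z hpq hpr hqr hrx hpx hzp hzq hzr hzx hineq
        σ⁻¹ hopt' ?_ ?_ ?_
      · rw [← e1, perm_inv_apply_self']
      · rw [← e2, perm_inv_apply_self']
      · rw [← e3, perm_inv_apply_self']
    · exact hpx (σ.injective (e2.trans e3.symm))
  · exact hqr (σ.injective (e1.trans e2.symm))
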